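/- Misinformed forecaster: fix γ > 0 and let Δ₁, Δ₂ be independent gamma random variables with shape 1/γ and rate 1/γ (so E[e^{−sΔⱼ}] = (1 + γs)^{−1/γ} for s ≥ 0). Conditionally on (Δ₁, Δ₂), let Y be exponential with rate Δ₁, i.e. P(Y ≤ x | Δ₁, Δ₂) = 1 − e^{−Δ₁x} for x ≥ 0, and let the forecast be F(x) = 1 − e^{−Δ₂x} for x ≥ 0. Then: (i) for all t ≥ 0, P(Y ≤ t) = E[F(t)] = 1 − (1 + γt)^{−1/γ}, so F is marginally calibrated; (ii) for every u ∈ (0,1), P(Z_F^{(t)} ≤ u, Y > t)/P(Y > t) → 0 as t → ∞, so the severity condition fails and F is not probabilistically tail calibrated. -/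

import Mathlib

open MeasureTheory ProbabilityTheory Filter Set Topology
open scoped ENNReal NNReal

noncomputable section

/-- Conditional probability of a set given a sub-σ-algebra, as a real-valued function. -/
def condProb {Ω : Type*} {m0 : MeasurableSpace Ω} (μ : Measure Ω) (m : MeasurableSpace Ω)
    (A : Set Ω) : Ω → ℝ :=
  μ[A.indicator (fun _ => (1 : ℝ))|m]

/-- The conditional forecast excess distribution `F_t`. -/
def excessCdf (F : ℝ → ℝ) (t x : ℝ) : ℝ :=
  if F t < 1 then (F (x + t) - F t) / (1 - F t) else 1

/-- The excess probability integral transform `Z_F^{(t)}`. -/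
def excessPIT {Ω : Type*} (F : Ω → ℝ → ℝ) (Y : Ω → ℝ) (t : ℝ) (ω : Ω) : ℝ :=
  excessCdf (F ω) t (Y ω - t)

/-- Upper endpoint `x_Y = sup {x : P(Y ≤ x) < 1}` of the outcome, in `EReal`. -/
def upperEndpoint {Ω : Type*} {mΩ : MeasurableSpace Ω} (μ : Measure Ω) (Y : Ω → ℝ) : EReal :=
  sSup (Real.toEReal '' {x : ℝ | μ {ω | Y ω ≤ x} < 1})

/-- Upper endpoint of a (deterministic) cdf. -/
def cdfEndpoint (F : ℝ → ℝ) : EReal :=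
  sSup (Real.toEReal '' {x : ℝ | F x < 1})

/-- The filter of real `t` tending to an extended-real endpoint `e` from below. -/
def toEndpoint (e : EReal) : Filter ℝ :=
  Filter.comap Real.toEReal (𝓝[<] e)

/-- `F` is a random cdf: measurable in `ω`, and almost surely a continuous cdf. -/
def IsRandomCdf {Ω : Type*} {mΩ : MeasurableSpace Ω} (μ : Measure Ω) (F : Ω → ℝ → ℝ) : Prop :=
  (∀ x : ℝ, Measurable fun ω => F ω x) ∧
    ∀ᵐ ω ∂μ, Monotone (F ω) ∧ Continuous (F ω) ∧
      Tendsto (F ω) atTop (𝓝 1) ∧ Tendsto (F ω) atBot (𝓝 0)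

/-- The endpoint assumption for a sub-σ-algebra `m`: the conditional distribution of `Y`
given `m` has (non-random) upper endpoint `x_Y`. -/
def EndpointAssumption {Ω : Type*} {m0 : MeasurableSpace Ω} (μ : Measure Ω)
    (m : MeasurableSpace Ω) (Y : Ω → ℝ) : Prop :=
  (∀ t : ℝ, (t : EReal) < upperEndpoint μ Y →
      ∀ᵐ ω ∂μ, 0 < condProb μ m {ω' | t < Y ω'} ω) ∧
    ∀ᵐ ω ∂μ, condProb μ m {ω' | upperEndpoint μ Y < (Y ω' : EReal)} ω = 0

/-- `F` is tail `m`-calibrated for `Y`. -/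
def TailCalibrated {Ω : Type*} {m0 : MeasurableSpace Ω} (μ : Measure Ω)
    (m : MeasurableSpace Ω) (F : Ω → ℝ → ℝ) (Y : Ω → ℝ) : Prop :=
  (∀ t : ℝ, (t : EReal) < upperEndpoint μ Y →
      ∀ᵐ ω ∂μ, 0 < (μ[fun ω' => 1 - F ω' t|m]) ω) ∧
    ∀ u ∈ Icc (0 : ℝ) 1, ∀ᵐ ω ∂μ,
      Tendsto (fun t : ℝ =>
          condProb μ m {ω' | excessPIT F Y t ω' ≤ u ∧ t < Y ω'} ω /
            (μ[fun ω' => 1 - F ω' t|m]) ω)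
        (toEndpoint (upperEndpoint μ Y)) (𝓝 u)

/-- `F` is probabilistically tail calibrated for `Y`. -/
def ProbTailCalibrated {Ω : Type*} {mΩ : MeasurableSpace Ω} (μ : Measure Ω)
    (F : Ω → ℝ → ℝ) (Y : Ω → ℝ) : Prop :=
  (∀ t : ℝ, (t : EReal) < upperEndpoint μ Y → 0 < ∫ ω, (1 - F ω t) ∂μ) ∧
    ∀ u ∈ Icc (0 : ℝ) 1,
      Tendsto (fun t : ℝ =>
          (μ {ω | excessPIT F Y t ω ≤ u ∧ t < Y ω}).toReal / ∫ ω, (1 - F ω t) ∂μ)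
        (toEndpoint (upperEndpoint μ Y)) (𝓝 u)

/-- `F` is marginally tail calibrated for `Y`. -/
def MargTailCalibrated {Ω : Type*} {mΩ : MeasurableSpace Ω} (μ : Measure Ω)
    (F : Ω → ℝ → ℝ) (Y : Ω → ℝ) : Prop :=
  (∀ t : ℝ, (t : EReal) < upperEndpoint μ Y → 0 < ∫ ω, (1 - F ω t) ∂μ) ∧
    Tendsto (fun t : ℝ =>
        ⨆ x : Ici (0 : ℝ),
          |(μ {ω | t < Y ω ∧ Y ω ≤ t + (x : ℝ)}).toReal / (∫ ω, (1 - F ω t) ∂μ) -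
            (∫ ω in {ω' | t < Y ω'}, excessCdf (F ω) t (x : ℝ) ∂μ) /
              (μ {ω' | t < Y ω'}).toReal|)
      (toEndpoint (upperEndpoint μ Y)) (𝓝 0)

/-- Generalized Pareto survival function `(1 + ξ x)₊^(-1/ξ)` with unit scale and shape `ξ`,
interpreted as `exp (-x)` when `ξ = 0`. -/
def gpdSurv (ξ x : ℝ) : ℝ :=
  if ξ = 0 then Real.exp (-x) else (max (1 + ξ * x) 0) ^ (-(1 : ℝ) / ξ)


section Helpers

@[reducible] def mpair {Ω : Type*} (Δ₁ Δ₂ : Ω → ℝ) : MeasurableSpace Ω :=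
  MeasurableSpace.comap (fun ω => (Δ₁ ω, Δ₂ ω)) inferInstance

lemma integral_indicator_one'' {Ω : Type*} {m0 : MeasurableSpace Ω} (μ : Measure Ω)
    {s : Set Ω} (hs : MeasurableSet s) :
    ∫ ω, s.indicator (fun _ => (1:ℝ)) ω ∂μ = (μ s).toReal :=
  integral_indicator_one (μ := μ) hs

lemma gamma_exp_integral {a r s : ℝ} (ha : 0 < a) (hr : 0 < r) (hs : 0 ≤ s) :
    ∫ x, Real.exp (-(x * s)) ∂(gammaMeasure a r) = (r / (r + s)) ^ a := by
  have hrs : 0 < r + s := by linarith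
  have hpdf : gammaPDF a r = fun x => ((Real.toNNReal (gammaPDFReal a r x)) : ℝ≥0∞) := rfl
  rw [gammaMeasure, hpdf,
    integral_withDensity_eq_integral_smul ((measurable_gammaPDFReal a r).real_toNNReal) _]
  have hnn : ∀ x, (0:ℝ) ≤ gammaPDFReal a r x := gammaPDFReal_nonneg ha hr
  have h1 : ∀ x : ℝ, (Real.toNNReal (gammaPDFReal a r x)) • Real.exp (-(x * s))
      = gammaPDFReal a r x * Real.exp (-(x * s)) := by
    intro x
    rw [NNReal.smul_def, Real.coe_toNNReal _ (hnn x)]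
    rfl
  simp only [h1]
  have h2 : ∫ x, gammaPDFReal a r x * Real.exp (-(x * s))
      = ∫ x in Ici (0:ℝ), gammaPDFReal a r x * Real.exp (-(x * s)) := by
    refine (setIntegral_eq_integral_of_forall_compl_eq_zero fun x hx => ?_).symm
    simp only [mem_Ici, not_le] at hx
    simp [gammaPDFReal, not_le.mpr hx]
  rw [h2, integral_Ici_eq_integral_Ioi]
  have h3 : ∀ x ∈ Ioi (0:ℝ), gammaPDFReal a r x * Real.exp (-(x * s))
      = (r ^ a / Real.Gamma a) * (x ^ (a - 1) * Real.exp (-((r + s) * x))) := by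
    intro x hx
    rw [mem_Ioi] at hx
    rw [gammaPDFReal, if_pos hx.le, mul_assoc, mul_assoc, ← Real.exp_add]
    ring_nf
  rw [setIntegral_congr_fun measurableSet_Ioi h3, integral_const_mul,
    Real.integral_rpow_mul_exp_neg_mul_Ioi ha hrs]
  have hΓ : Real.Gamma a ≠ 0 := (Real.Gamma_pos_of_pos ha).ne'
  rw [Real.div_rpow hr.le hrs.le, one_div, Real.inv_rpow hrs.le]
  field_simp

lemma laplace_gamma {Ω : Type*} {m0 : MeasurableSpace Ω} (μ : Measure Ω)
    {γ : ℝ} (hγ : 0 < γ) {Δ : Ω → ℝ} (hΔ : Measurable Δ)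
    (hlaw : μ.map Δ = gammaMeasure (1 / γ) (1 / γ)) {s : ℝ} (hs : 0 ≤ s) :
    ∫ ω, Real.exp (-(Δ ω * s)) ∂μ = (1 + γ * s) ^ (-(1 / γ)) := by
  have hγ' : (0:ℝ) < 1 / γ := by positivity
  have h1 : (0:ℝ) < 1 + γ * s := by positivity
  have := integral_map (μ := μ) hΔ.aemeasurable
    (f := fun x => Real.exp (-(x * s)))
    ((measurable_id.mul_const s).neg.exp).aestronglyMeasurable
  rw [hlaw, gamma_exp_integral hγ' hγ' hs] at this
  rw [← this]
  have hb : (1 / γ) / (1 / γ + s) = (1 + γ * s)⁻¹ := by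
    rw [inv_eq_one_div, div_eq_div_iff (by positivity) h1.ne']
    field_simp
  rw [hb, Real.inv_rpow h1.le, ← Real.rpow_neg h1.le]

lemma integrable_exp_neg_mul {Ω : Type*} {m0 : MeasurableSpace Ω} (μ : Measure Ω)
    [IsProbabilityMeasure μ] {Δ : Ω → ℝ} (hΔ : Measurable Δ) {s : ℝ} (hs : 0 ≤ s)
    (hΔnn : ∀ᵐ ω ∂μ, 0 ≤ Δ ω) :
    Integrable (fun ω => Real.exp (-(Δ ω * s))) μ := by
  refine Integrable.mono' (integrable_const 1)
    ((hΔ.mul_const s).neg.exp).aestronglyMeasurable ?_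
  filter_upwards [hΔnn] with ω hω
  rw [Real.norm_eq_abs, abs_of_pos (Real.exp_pos _)]
  calc Real.exp (-(Δ ω * s)) ≤ Real.exp 0 := Real.exp_le_exp.mpr (by nlinarith)
    _ = 1 := Real.exp_zero

end Helpers

/-- the misinformed forecaster is marginally calibrated but the severity
condition fails, so it is not probabilistically tail calibrated. -/
theorem misinformed_forecaster
    {Ω : Type*} {m0 : MeasurableSpace Ω} (μ : Measure Ω) [IsProbabilityMeasure μ]
    (γ : ℝ) (hγ : 0 < γ)
    (Δ₁ Δ₂ Y : Ω → ℝ) (hΔ₁ : Measurable Δ₁) (hΔ₂ : Measurable Δ₂) (hY : Measurable Y)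
    (hlaw₁ : μ.map Δ₁ = gammaMeasure (1 / γ) (1 / γ))
    (hlaw₂ : μ.map Δ₂ = gammaMeasure (1 / γ) (1 / γ))
    (hindep : IndepFun Δ₁ Δ₂ μ)
    (hcond : ∀ x : ℝ, 0 ≤ x →
      condProb μ (MeasurableSpace.comap (fun ω => (Δ₁ ω, Δ₂ ω)) inferInstance)
          {ω' | Y ω' ≤ x} =ᵐ[μ] fun ω => 1 - Real.exp (-(Δ₁ ω) * x))
    (hYnonneg : ∀ᵐ ω ∂μ, 0 ≤ Y ω)
    (F : Ω → ℝ → ℝ)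
    (hFdef : ∀ ω x, F ω x = if 0 ≤ x then 1 - Real.exp (-(Δ₂ ω) * x) else 0) :
    (∀ t : ℝ, 0 ≤ t →
        (μ {ω | Y ω ≤ t}).toReal = ∫ ω, F ω t ∂μ ∧
        (μ {ω | Y ω ≤ t}).toReal = 1 - (1 + γ * t) ^ (-(1 / γ))) ∧
      (∀ u ∈ Ioo (0 : ℝ) 1,
        Tendsto (fun t : ℝ =>
            (μ {ω | excessPIT F Y t ω ≤ u ∧ t < Y ω}).toReal /
              (μ {ω | t < Y ω}).toReal)
          atTop (𝓝 0)) ∧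
      ¬ ProbTailCalibrated μ F Y := by
  classical
  have hm : mpair Δ₁ Δ₂ ≤ m0 := (hΔ₁.prodMk hΔ₂).comap_le
  have hcond' : ∀ x : ℝ, 0 ≤ x →
      (μ[({ω' | Y ω' ≤ x}).indicator (fun _ => (1:ℝ))|mpair Δ₁ Δ₂]) =ᵐ[μ]
        fun ω => 1 - Real.exp (-(Δ₁ ω) * x) := hcond
  set S : ℝ → ℝ := fun t => (1 + γ * t) ^ (-(1 / γ)) with hS_def
  have hSpos : ∀ t : ℝ, 0 ≤ t → 0 < S t := fun t ht =>
    Real.rpow_pos_of_pos (by positivity) _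
  have hΔnn : ∀ (Δ : Ω → ℝ), Measurable Δ → μ.map Δ = gammaMeasure (1 / γ) (1 / γ) →
      ∀ᵐ ω ∂μ, 0 ≤ Δ ω := by
    intro Δ hΔ hlaw
    rw [ae_iff]
    have h1 : {ω | ¬ 0 ≤ Δ ω} = Δ ⁻¹' (Iio 0) := by ext ω; simp [not_le]
    rw [h1, ← Measure.map_apply hΔ measurableSet_Iio, hlaw, gammaMeasure,
      withDensity_apply _ measurableSet_Iio, lintegral_gammaPDF_of_nonpos le_rfl]
  have hΔ₁nn := hΔnn Δ₁ hΔ₁ hlaw₁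
  have hΔ₂nn := hΔnn Δ₂ hΔ₂ hlaw₂
  have hint1 : ∀ t : ℝ, 0 ≤ t → Integrable (fun ω => Real.exp (-(Δ₁ ω * t))) μ :=
    fun t ht => integrable_exp_neg_mul μ hΔ₁ ht hΔ₁nn
  have hint2 : ∀ t : ℝ, 0 ≤ t → Integrable (fun ω => Real.exp (-(Δ₂ ω * t))) μ :=
    fun t ht => integrable_exp_neg_mul μ hΔ₂ ht hΔ₂nn
  have hlap1 : ∀ t : ℝ, 0 ≤ t → ∫ ω, Real.exp (-(Δ₁ ω * t)) ∂μ = S t :=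
    fun t ht => laplace_gamma μ hγ hΔ₁ hlaw₁ ht
  have hlap2 : ∀ t : ℝ, 0 ≤ t → ∫ ω, Real.exp (-(Δ₂ ω * t)) ∂μ = S t :=
    fun t ht => laplace_gamma μ hγ hΔ₂ hlaw₂ ht
  have hYm : ∀ t : ℝ, MeasurableSet {ω | Y ω ≤ t} := fun t => hY measurableSet_Iic
  have hYle : ∀ t : ℝ, 0 ≤ t → (μ {ω | Y ω ≤ t}).toReal = 1 - S t := by
    intro t ht
    have hend : ∫ ω, (1 - Real.exp (-(Δ₁ ω) * t)) ∂μ = 1 - S t := by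
      simp only [neg_mul]
      rw [integral_sub (integrable_const 1) (hint1 t ht), integral_const, probReal_univ,
        hlap1 t ht]
      simp
    calc (μ {ω | Y ω ≤ t}).toReal
        = ∫ ω, ({ω' | Y ω' ≤ t}).indicator (fun _ => (1:ℝ)) ω ∂μ :=
          (integral_indicator_one'' μ (hYm t)).symm
      _ = ∫ ω, (μ[({ω' | Y ω' ≤ t}).indicator (fun _ => (1:ℝ))|mpair Δ₁ Δ₂]) ω ∂μ :=
          (integral_condExp hm).symm
      _ = ∫ ω, (1 - Real.exp (-(Δ₁ ω) * t)) ∂μ := integral_congr_ae (hcond' t ht)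
      _ = 1 - S t := hend
  have hFint : ∀ t : ℝ, 0 ≤ t → ∫ ω, F ω t ∂μ = 1 - S t := by
    intro t ht
    have h1 : (fun ω => F ω t) = fun ω => 1 - Real.exp (-(Δ₂ ω * t)) := by
      funext ω; rw [hFdef, if_pos ht, neg_mul]
    rw [h1, integral_sub (integrable_const 1) (hint2 t ht), integral_const, probReal_univ,
      hlap2 t ht]
    simp
  have hgt_eq : ∀ t : ℝ, {ω | t < Y ω} = {ω | Y ω ≤ t}ᶜ := by
    intro t; ext ω; simp [not_le]
  have hgtm : ∀ t : ℝ, MeasurableSet {ω | t < Y ω} := by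
    intro t; rw [hgt_eq]; exact (hYm t).compl
  have hYgt : ∀ t : ℝ, 0 ≤ t → (μ {ω | t < Y ω}).toReal = S t := by
    intro t ht
    rw [hgt_eq, prob_compl_eq_one_sub (hYm t),
      ENNReal.toReal_sub_of_le prob_le_one ENNReal.one_ne_top, ENNReal.toReal_one,
      hYle t ht]
    ring
  have hcondgt : ∀ t : ℝ, 0 ≤ t →
      (μ[({ω' | t < Y ω'}).indicator (fun _ => (1:ℝ))|mpair Δ₁ Δ₂]) =ᵐ[μ]
        fun ω => Real.exp (-(Δ₁ ω * t)) := by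
    intro t ht
    have hsplit : ({ω' | t < Y ω'}).indicator (fun _ => (1:ℝ))
        = (fun _ => (1:ℝ)) - ({ω' | Y ω' ≤ t}).indicator (fun _ => (1:ℝ)) := by
      funext ω
      by_cases h : Y ω ≤ t
      · simp [Set.indicator_apply, h, not_lt.mpr h]
      · simp [Set.indicator_apply, h, not_le.mp h]
    rw [hsplit]
    have h1 := condExp_sub (m := mpair Δ₁ Δ₂) (μ := μ) (integrable_const (1:ℝ))
      ((integrable_const (1:ℝ)).indicator (hYm t))
    refine h1.trans ?_
    have h3 : μ[(fun _ => (1:ℝ))|mpair Δ₁ Δ₂] = fun _ => (1:ℝ) := condExp_const hm 1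
    filter_upwards [hcond' t ht] with ω hω
    simp only [Pi.sub_apply, h3, hω, neg_mul]
    ring
  have hprod : ∀ t : ℝ, 0 ≤ t → ∀ b : ℝ,
      (μ {ω | Δ₂ ω ≤ b ∧ t < Y ω}).toReal = (μ {ω | Δ₂ ω ≤ b}).toReal * S t := by
    intro t ht b
    have hB0 : MeasurableSet {ω | Δ₂ ω ≤ b} := hΔ₂ measurableSet_Iic
    have hBm : MeasurableSet[mpair Δ₁ Δ₂] {ω | Δ₂ ω ≤ b} :=
      ⟨univ ×ˢ Iic b, MeasurableSet.univ.prod measurableSet_Iic, by ext ω; simp⟩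
    have hA : MeasurableSet {ω | t < Y ω} := hgtm t
    have hind : Integrable (({ω' | t < Y ω'}).indicator (fun _ => (1:ℝ))) μ :=
      (integrable_const 1).indicator hA
    have hseteq : {ω | Δ₂ ω ≤ b ∧ t < Y ω} = {ω | t < Y ω} ∩ {ω | Δ₂ ω ≤ b} := by
      ext ω; simp [and_comm]
    have hXY : IndepFun (fun ω => ((Iic b).indicator (fun _ => (1:ℝ))) (Δ₂ ω))
        (fun ω => Real.exp (-(Δ₁ ω * t))) μ :=
      hindep.symm.comp (measurable_const.indicator measurableSet_Iic)
        ((measurable_id.mul_const t).neg.exp)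
    have hmul := hXY.integral_mul_eq_mul_integral
       ((measurable_const.indicator measurableSet_Iic).comp hΔ₂).aestronglyMeasurable
       ((hΔ₁.mul_const t).neg.exp).aestronglyMeasurable
    have hXeq : (fun ω => ((Iic b).indicator (fun _ => (1:ℝ))) (Δ₂ ω))
        = ({ω | Δ₂ ω ≤ b}).indicator (fun _ => (1:ℝ)) := by
      funext ω
      by_cases h : Δ₂ ω ≤ b <;> simp [Set.indicator_apply, h]
    calc (μ {ω | Δ₂ ω ≤ b ∧ t < Y ω}).toReal
        = ((μ.restrict {ω | Δ₂ ω ≤ b}) {ω | t < Y ω}).toReal := by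
          rw [Measure.restrict_apply hA, ← hseteq]
      _ = ∫ ω in {ω | Δ₂ ω ≤ b}, ({ω' | t < Y ω'}).indicator (fun _ => (1:ℝ)) ω ∂μ :=
          (integral_indicator_one'' (μ.restrict {ω | Δ₂ ω ≤ b}) hA).symm
      _ = ∫ ω in {ω | Δ₂ ω ≤ b}, (μ[({ω' | t < Y ω'}).indicator (fun _ => (1:ℝ))|mpair Δ₁ Δ₂]) ω ∂μ :=
          (setIntegral_condExp hm hind hBm).symm
      _ = ∫ ω in {ω | Δ₂ ω ≤ b}, Real.exp (-(Δ₁ ω * t)) ∂μ :=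
          integral_congr_ae (ae_restrict_of_ae (hcondgt t ht))
      _ = ∫ ω, ({ω | Δ₂ ω ≤ b}).indicator (fun ω' => Real.exp (-(Δ₁ ω' * t))) ω ∂μ := by
          rw [integral_indicator hB0]
      _ = ∫ ω, ((fun ω' => ((Iic b).indicator (fun _ => (1:ℝ))) (Δ₂ ω')) *
            (fun ω' => Real.exp (-(Δ₁ ω' * t)))) ω ∂μ := by
          refine integral_congr_ae (ae_of_all _ fun ω => ?_)
          by_cases h : Δ₂ ω ≤ b <;>
            simp [Set.indicator_apply, h]
      _ = (∫ ω, ((Iic b).indicator (fun _ => (1:ℝ))) (Δ₂ ω) ∂μ) *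
            ∫ ω, Real.exp (-(Δ₁ ω * t)) ∂μ := hmul
      _ = (μ {ω | Δ₂ ω ≤ b}).toReal * S t := by
          rw [hlap1 t ht]
          congr 1
          rw [show (fun ω => ((Iic b).indicator (fun _ => (1:ℝ))) (Δ₂ ω)) = _ from hXeq,
            integral_indicator_one'' μ hB0]
  -- Part (ii)
  have hPart2 : ∀ u ∈ Ioo (0 : ℝ) 1,
      Tendsto (fun t : ℝ =>
          (μ {ω | excessPIT F Y t ω ≤ u ∧ t < Y ω}).toReal /
            (μ {ω | t < Y ω}).toReal) atTop (𝓝 0) := by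
    rintro u ⟨hu0, hu1⟩
    set c := -Real.log (1 - u) with hc_def
    have hc : 0 < c := by
      have : Real.log (1 - u) < 0 := Real.log_neg (by linarith) (by linarith)
      simp only [hc_def]; linarith
    -- μ {Δ₂ ≤ 0} = 0
    have hzero : μ {ω | Δ₂ ω ≤ 0} = 0 := by
      have h1 : {ω | Δ₂ ω ≤ 0} = Δ₂ ⁻¹' (Iic 0) := rfl
      rw [h1, ← Measure.map_apply hΔ₂ measurableSet_Iic, hlaw₂, gammaMeasure,
        withDensity_apply _ measurableSet_Iic]
      have h2 : ∫⁻ x in Iic (0:ℝ), gammaPDF (1/γ) (1/γ) x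
          = ∫⁻ x in Iio (0:ℝ), gammaPDF (1/γ) (1/γ) x :=
        setLIntegral_congr Iio_ae_eq_Iic.symm
      rw [h2, lintegral_gammaPDF_of_nonpos le_rfl]
    rw [Metric.tendsto_atTop]
    intro ε hε
    -- choose δ with μ {Δ₂ ≤ δ} small
    obtain ⟨δ, hδpos, hδ⟩ : ∃ δ : ℝ, 0 < δ ∧ (μ {ω | Δ₂ ω ≤ δ}).toReal < ε / 2 := by
      have hanti : Antitone (fun n : ℕ => {ω | Δ₂ ω ≤ 1 / ((n:ℝ) + 1)}) := by
        intro n k hnk ω hω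
        simp only [mem_setOf_eq] at hω ⊢
        refine hω.trans (by
          apply one_div_le_one_div_of_le (by positivity)
          exact_mod_cast by exact_mod_cast Nat.add_le_add_right hnk 1)
      have hInt : (⋂ n : ℕ, {ω | Δ₂ ω ≤ 1 / ((n:ℝ) + 1)}) = {ω | Δ₂ ω ≤ 0} := by
        ext ω
        simp only [mem_iInter, mem_setOf_eq]
        constructor
        · intro h
          by_contra hlt
          push_neg at hlt
          obtain ⟨n, hn⟩ := exists_nat_one_div_lt hlt
          exact absurd (h n) (not_le.mpr hn)
        · intro h n; exact h.trans (by positivity)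
      have htend := tendsto_measure_iInter_atTop (μ := μ)
        (s := fun n : ℕ => {ω | Δ₂ ω ≤ 1 / ((n:ℝ) + 1)})
        (fun n => (hΔ₂ measurableSet_Iic).nullMeasurableSet) hanti
        ⟨0, measure_ne_top μ _⟩
      rw [hInt, hzero] at htend
      have hev : ∀ᶠ n : ℕ in atTop,
          μ {ω | Δ₂ ω ≤ 1 / ((n:ℝ) + 1)} < ENNReal.ofReal (ε / 2) := by
        refine htend.eventually_lt_const ?_
        simp [ENNReal.ofReal_pos]; linarith
      obtain ⟨n, hn⟩ := hev.exists
      exact ⟨1 / ((n:ℝ) + 1), by positivity, ENNReal.toReal_lt_of_lt_ofReal hn⟩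
    set a := c / δ with ha_def
    have ha : 0 < a := div_pos hc hδpos
    -- inclusion of the event
    have hincl : ∀ t : ℝ, 0 ≤ t →
        {ω | excessPIT F Y t ω ≤ u ∧ t < Y ω} ⊆
          ({ω | Y ω ≤ t + a} \ {ω | Y ω ≤ t}) ∪ {ω | Δ₂ ω ≤ δ ∧ t < Y ω} := by
      intro t ht ω hω
      obtain ⟨hZ, htY⟩ := hω
      by_cases hδ2 : Δ₂ ω ≤ δ
      · exact Or.inr ⟨hδ2, htY⟩
      · push_neg at hδ2
        have hΔpos : 0 < Δ₂ ω := hδpos.trans hδ2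
        left
        refine ⟨?_, not_le.mpr htY⟩
        have hYω : (0:ℝ) ≤ Y ω := ht.trans htY.le
        have hFt : F ω t = 1 - Real.exp (-(Δ₂ ω) * t) := by rw [hFdef, if_pos ht]
        have hFY : F ω (Y ω) = 1 - Real.exp (-(Δ₂ ω) * Y ω) := by rw [hFdef, if_pos hYω]
        have hFtlt : F ω t < 1 := by
          rw [hFt]; have := Real.exp_pos (-(Δ₂ ω) * t); linarith
        have hZval : excessPIT F Y t ω =
            (Real.exp (-(Δ₂ ω) * t) - Real.exp (-(Δ₂ ω) * Y ω)) / Real.exp (-(Δ₂ ω) * t) := by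
          rw [excessPIT, excessCdf, if_pos hFtlt, sub_add_cancel, hFY, hFt]
          ring_nf
        rw [hZval] at hZ
        have hexp_t : (0:ℝ) < Real.exp (-(Δ₂ ω) * t) := Real.exp_pos _
        rw [div_le_iff₀ hexp_t] at hZ
        have hkey : (1 - u) * Real.exp (-(Δ₂ ω) * t) ≤ Real.exp (-(Δ₂ ω) * Y ω) := by
          nlinarith
        have hlog : Real.log (1 - u) + (-(Δ₂ ω) * t) ≤ -(Δ₂ ω) * Y ω := by
          have h1 : (1 - u) * Real.exp (-(Δ₂ ω) * t)
              = Real.exp (Real.log (1 - u) + (-(Δ₂ ω) * t)) := by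
            rw [Real.exp_add, Real.exp_log (by linarith)]
          rw [h1] at hkey
          exact Real.exp_le_exp.mp hkey
        have h2 : Δ₂ ω * (Y ω - t) ≤ c := by simp only [hc_def]; nlinarith
        have h3 : Y ω - t ≤ c / Δ₂ ω := by
          rw [le_div_iff₀ hΔpos]; nlinarith
        have h4 : c / Δ₂ ω < c / δ := div_lt_div_of_pos_left hc hδpos hδ2
        simp only [mem_setOf_eq]
        have : Y ω - t < a := lt_of_le_of_lt h3 (by rw [ha_def]; exact h4)
        linarith
    -- quotient of survival functions
    have hSa : ∀ t : ℝ, 0 ≤ t → S (t + a) / S t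
        = ((1 + γ * t) / (1 + γ * (t + a))) ^ (1 / γ) := by
      intro t ht
      have hx : (0:ℝ) < 1 + γ * t := by positivity
      have hy : (0:ℝ) < 1 + γ * (t + a) := by nlinarith
      simp only [hS_def]
      rw [Real.rpow_neg hy.le, Real.rpow_neg hx.le, Real.div_rpow hx.le hy.le]
      rw [div_eq_mul_inv, inv_inv, mul_comm]
      exact (div_eq_mul_inv _ _).symm
    have hg : Tendsto (fun t : ℝ => ((1 + γ * t) / (1 + γ * (t + a))) ^ (1 / γ))
        atTop (𝓝 1) := by
      have hdenom : Tendsto (fun t : ℝ => 1 + γ * (t + a)) atTop atTop := by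
        apply tendsto_atTop_add_const_left
        exact (tendsto_atTop_add_const_right atTop a tendsto_id).const_mul_atTop hγ
      have hbase : Tendsto (fun t : ℝ => (1 + γ * t) / (1 + γ * (t + a))) atTop (𝓝 1) := by
        have h0 : Tendsto (fun t : ℝ => 1 - (γ * a) / (1 + γ * (t + a))) atTop (𝓝 (1 - 0)) :=
          tendsto_const_nhds.sub (Tendsto.div_atTop tendsto_const_nhds hdenom)
        rw [sub_zero] at h0
        refine h0.congr' ?_
        filter_upwards [eventually_ge_atTop (0:ℝ)] with t ht
        have hy : (0:ℝ) < 1 + γ * (t + a) := by nlinarith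
        field_simp
        ring
      have hcont : ContinuousAt (fun x : ℝ => x ^ (1 / γ)) 1 :=
        Real.continuousAt_rpow_const 1 (1 / γ) (Or.inl one_ne_zero)
      have := hcont.tendsto.comp hbase
      rwa [Real.one_rpow] at this
    have hev1 : ∀ᶠ t : ℝ in atTop,
        1 - ((1 + γ * t) / (1 + γ * (t + a))) ^ (1 / γ) < ε / 2 := by
      have := hg.eventually (eventually_gt_nhds (show 1 - ε/2 < 1 by linarith))
      filter_upwards [this] with t htg
      linarith
    rw [eventually_atTop] at hev1
    obtain ⟨T, hT⟩ := hev1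
    refine ⟨max T 0, fun t htT => ?_⟩
    have ht0 : (0:ℝ) ≤ t := le_trans (le_max_right T 0) htT
    have htT' : T ≤ t := le_trans (le_max_left T 0) htT
    have hSt : 0 < S t := hSpos t ht0
    have hSta : 0 < S (t + a) := hSpos (t + a) (by linarith)
    -- numerator bound
    have hnum : (μ {ω | excessPIT F Y t ω ≤ u ∧ t < Y ω}).toReal
        ≤ (S t - S (t + a)) + (ε / 2) * S t := by
      have hsub : {ω | Y ω ≤ t} ⊆ {ω | Y ω ≤ t + a} := by
        intro ω h
        simp only [mem_setOf_eq] at h ⊢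
        linarith [ha]
      have hd : μ ({ω | Y ω ≤ t + a} \ {ω | Y ω ≤ t})
          = μ {ω | Y ω ≤ t + a} - μ {ω | Y ω ≤ t} :=
        measure_diff hsub (hYm t).nullMeasurableSet (measure_ne_top μ _)
      have hd' : (μ ({ω | Y ω ≤ t + a} \ {ω | Y ω ≤ t})).toReal
          = (1 - S (t + a)) - (1 - S t) := by
        rw [hd, ENNReal.toReal_sub_of_le (measure_mono hsub) (measure_ne_top μ _),
          hYle (t + a) (by linarith), hYle t ht0]
      have hd2 : (μ {ω | Δ₂ ω ≤ δ ∧ t < Y ω}).toReal ≤ (ε / 2) * S t := by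
        rw [hprod t ht0 δ]
        exact mul_le_mul_of_nonneg_right hδ.le hSt.le
      have hle1 : μ {ω | excessPIT F Y t ω ≤ u ∧ t < Y ω}
          ≤ μ ({ω | Y ω ≤ t + a} \ {ω | Y ω ≤ t}) + μ {ω | Δ₂ ω ≤ δ ∧ t < Y ω} :=
        (measure_mono (hincl t ht0)).trans (measure_union_le _ _)
      have hle2 : (μ {ω | excessPIT F Y t ω ≤ u ∧ t < Y ω}).toReal
          ≤ (μ ({ω | Y ω ≤ t + a} \ {ω | Y ω ≤ t})).toReal
            + (μ {ω | Δ₂ ω ≤ δ ∧ t < Y ω}).toReal := by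
        rw [← ENNReal.toReal_add (measure_ne_top μ _) (measure_ne_top μ _)]
        exact ENNReal.toReal_mono (by
          exact ENNReal.add_ne_top.mpr ⟨measure_ne_top μ _, measure_ne_top μ _⟩) hle1
      calc (μ {ω | excessPIT F Y t ω ≤ u ∧ t < Y ω}).toReal
          ≤ (μ ({ω | Y ω ≤ t + a} \ {ω | Y ω ≤ t})).toReal
            + (μ {ω | Δ₂ ω ≤ δ ∧ t < Y ω}).toReal := hle2
        _ ≤ (S t - S (t + a)) + (ε / 2) * S t := by rw [hd']; linarith [hd2]
    have hratio_nonneg : 0 ≤ (μ {ω | excessPIT F Y t ω ≤ u ∧ t < Y ω}).toReal /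
        (μ {ω | t < Y ω}).toReal := div_nonneg ENNReal.toReal_nonneg ENNReal.toReal_nonneg
    rw [Real.dist_eq, sub_zero, abs_of_nonneg hratio_nonneg]
    have hq : S (t + a) = ((1 + γ * t) / (1 + γ * (t + a))) ^ (1 / γ) * S t := by
      rw [← hSa t ht0, div_mul_cancel₀ _ hSt.ne']
    have hTt := hT t htT'
    have hSta_gt : (1 - ε / 2) * S t < S (t + a) := by
      rw [hq]
      have : 1 - ε / 2 < ((1 + γ * t) / (1 + γ * (t + a))) ^ (1 / γ) := by linarith
      nlinarith
    rw [hYgt t ht0, div_lt_iff₀ hSt]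
    nlinarith
  refine ⟨fun t ht => ⟨by rw [hYle t ht, hFint t ht], hYle t ht⟩, hPart2, ?_⟩
  -- Part (iii)
  have hupper : upperEndpoint μ Y = ⊤ := by
    have hall : ∀ x : ℝ, μ {ω | Y ω ≤ x} < 1 := by
      intro x
      have hx0 : μ {ω | Y ω ≤ x} ≤ μ {ω | Y ω ≤ max x 0} :=
        measure_mono (by
          intro ω h
          simp only [mem_setOf_eq] at h ⊢
          exact le_trans h (le_max_left _ _))
      refine lt_of_le_of_lt hx0 ?_
      have h1 : (μ {ω | Y ω ≤ max x 0}).toReal = 1 - S (max x 0) := hYle _ (le_max_right _ _)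
      have h2 : 0 < S (max x 0) := hSpos _ (le_max_right x 0)
      refine lt_of_le_of_ne prob_le_one fun hEq => ?_
      rw [hEq, ENNReal.toReal_one] at h1
      linarith
    rw [upperEndpoint, sSup_eq_top]
    intro b hb
    obtain ⟨x, hbx, _⟩ := EReal.exists_between_coe_real hb
    exact ⟨(x : EReal), ⟨x, hall x, rfl⟩, hbx⟩
  have hatTop_le : atTop ≤ toEndpoint (⊤ : EReal) := by
    rw [toEndpoint]
    refine Filter.tendsto_iff_comap.mp ?_
    rw [tendsto_nhdsWithin_iff]
    refine ⟨?_, ?_⟩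
    · rw [EReal.tendsto_nhds_top_iff_real]
      intro x
      filter_upwards [eventually_gt_atTop x] with t ht
      exact_mod_cast ht
    · filter_upwards with t
      exact EReal.coe_lt_top t
  rintro ⟨hposP, hsev⟩
  have h2 := hsev (1/2) ⟨by norm_num, by norm_num⟩
  rw [hupper] at h2
  have h2' := h2.mono_left hatTop_le
  have h0 := hPart2 (1/2) ⟨by norm_num, by norm_num⟩
  have heq : (fun t : ℝ => (μ {ω | excessPIT F Y t ω ≤ (1/2:ℝ) ∧ t < Y ω}).toReal /
        ∫ ω, (1 - F ω t) ∂μ)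
      =ᶠ[atTop] (fun t : ℝ => (μ {ω | excessPIT F Y t ω ≤ (1/2:ℝ) ∧ t < Y ω}).toReal /
        (μ {ω | t < Y ω}).toReal) := by
    filter_upwards [eventually_ge_atTop (0:ℝ)] with t ht
    congr 1
    have hFi : Integrable (fun ω => F ω t) μ := by
      have h1 : (fun ω => F ω t) = fun ω => 1 - Real.exp (-(Δ₂ ω * t)) := by
        funext ω; rw [hFdef, if_pos ht, neg_mul]
      rw [h1]; exact (integrable_const 1).sub (hint2 t ht)
    rw [integral_sub (integrable_const 1) hFi, integral_const, probReal_univ,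
      one_smul, hFint t ht, hYgt t ht]
    ring
  have hcontra := tendsto_nhds_unique (h2'.congr' heq) h0
  norm_num at hcontra
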